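/- Tight ε-DP to RDP bound, monotone form: define ε̂(α) = (1/(α−1)) · log( e^{αε}/(e^ε+1) + e^ε·e^{−αε}/(e^ε+1) ) for α > 1 and ε ≥ 0. Then ε̂(α) = ε − (1/(α−1))·log( (1+e^{−ε})/(1+e^{−(2α−1)ε}) ), and 0 ≤ ε̂(α) ≤ ε. -/

import Mathlib

open Real

theorem tight_dp_to_rdp (ε α : ℝ) (hε : 0 ≤ ε) (hα : 1 < α) :
    (α - 1)⁻¹ * Real.log (Real.exp (α * ε) / (Real.exp ε + 1) +
        Real.exp ε * Real.exp (-α * ε) / (Real.exp ε + 1))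
      = ε - (α - 1)⁻¹ * Real.log ((1 + Real.exp (-ε)) / (1 + Real.exp (-(2 * α - 1) * ε))) ∧
    0 ≤ (α - 1)⁻¹ * Real.log (Real.exp (α * ε) / (Real.exp ε + 1) +
        Real.exp ε * Real.exp (-α * ε) / (Real.exp ε + 1)) ∧
    (α - 1)⁻¹ * Real.log (Real.exp (α * ε) / (Real.exp ε + 1) +
        Real.exp ε * Real.exp (-α * ε) / (Real.exp ε + 1)) ≤ ε := by
  have h1 : 0 < α - 1 := by linarith
  have hE : (0:ℝ) < Real.exp ε + 1 := by positivity
  have hd1 : (0:ℝ) < 1 + Real.exp (-ε) := by positivity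
  have hd2 : (0:ℝ) < 1 + Real.exp (-(2 * α - 1) * ε) := by positivity
  have num : Real.exp (α * ε) + Real.exp ε * Real.exp (-α * ε)
      = (Real.exp ((α - 1) * ε) + Real.exp (-α * ε)) * Real.exp ε := by
    ring_nf; simp only [← Real.exp_add]; ring_nf
  have den : (1 + Real.exp (-ε)) = Real.exp (-ε) * (Real.exp ε + 1) := by
    rw [mul_add, ← Real.exp_add]; ring_nf; simp [add_comm]
  have prod : Real.exp ((α - 1) * ε) * (1 + Real.exp (-(2 * α - 1) * ε))
      = Real.exp ((α - 1) * ε) + Real.exp (-α * ε) := by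
    rw [mul_add, mul_one, ← Real.exp_add]; ring_nf
  have hA_eq : Real.exp (α * ε) / (Real.exp ε + 1) +
        Real.exp ε * Real.exp (-α * ε) / (Real.exp ε + 1)
      = Real.exp ((α - 1) * ε) * ((1 + Real.exp (-(2 * α - 1) * ε)) / (1 + Real.exp (-ε))) := by
    rw [← add_div, num, ← mul_div_assoc, prod, den, Real.exp_neg]
    have h := (Real.exp_pos ε).ne'
    field_simp
  rw [hA_eq]
  have hlog : Real.log (Real.exp ((α - 1) * ε) * ((1 + Real.exp (-(2 * α - 1) * ε)) / (1 + Real.exp (-ε))))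
      = (α - 1) * ε + (Real.log (1 + Real.exp (-(2 * α - 1) * ε)) - Real.log (1 + Real.exp (-ε))) := by
    rw [Real.log_mul (Real.exp_pos _).ne' (by positivity), Real.log_exp, Real.log_div hd2.ne' hd1.ne']
  rw [hlog]
  have hratio : Real.log ((1 + Real.exp (-ε)) / (1 + Real.exp (-(2 * α - 1) * ε)))
      = Real.log (1 + Real.exp (-ε)) - Real.log (1 + Real.exp (-(2 * α - 1) * ε)) :=
    Real.log_div hd1.ne' hd2.ne'
  have key : 1 + Real.exp (-ε) ≤ Real.exp ((α - 1) * ε) * (1 + Real.exp (-(2 * α - 1) * ε)) := by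
    rw [prod]
    have hx : 0 ≤ (α - 1) * ε := mul_nonneg h1.le hε
    have ht : Real.exp (-ε) ≤ 1 := Real.exp_le_one_iff.2 (by linarith)
    have hex : Real.exp (-((α - 1) * ε)) ≤ 1 := Real.exp_le_one_iff.2 (by linarith)
    have h3 : 2 ≤ Real.exp ((α - 1) * ε) + Real.exp (-((α - 1) * ε)) := by
      have := Real.add_one_le_exp ((α - 1) * ε)
      have := Real.add_one_le_exp (-((α - 1) * ε))
      linarith
    have hsplit : Real.exp (-α * ε) = Real.exp (-ε) * Real.exp (-((α - 1) * ε)) := by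
      rw [← Real.exp_add]; ring_nf
    rw [hsplit]
    nlinarith [Real.exp_pos (-ε), Real.exp_pos (-((α - 1) * ε))]
  refine ⟨?_, ?_, ?_⟩
  · rw [hratio]; field_simp; ring
  · have hlogle : Real.log (1 + Real.exp (-ε))
        ≤ (α - 1) * ε + Real.log (1 + Real.exp (-(2 * α - 1) * ε)) := by
      have := Real.log_le_log hd1 key
      rwa [Real.log_mul (Real.exp_pos _).ne' hd2.ne', Real.log_exp] at this
    have : 0 ≤ (α - 1) * ε + (Real.log (1 + Real.exp (-(2 * α - 1) * ε)) - Real.log (1 + Real.exp (-ε))) := by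
      linarith
    positivity
  · have key2 : Real.exp (-(2 * α - 1) * ε) ≤ Real.exp (-ε) := by
      apply Real.exp_le_exp.2; nlinarith
    have hlog2 : Real.log (1 + Real.exp (-(2 * α - 1) * ε)) ≤ Real.log (1 + Real.exp (-ε)) :=
      Real.log_le_log hd2 (by linarith)
    have hle : (α - 1) * ε + (Real.log (1 + Real.exp (-(2 * α - 1) * ε)) - Real.log (1 + Real.exp (-ε))) ≤ (α - 1) * ε := by linarith
    calc (α - 1)⁻¹ * ((α - 1) * ε + (Real.log (1 + Real.exp (-(2 * α - 1) * ε)) - Real.log (1 + Real.exp (-ε))))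
        ≤ (α - 1)⁻¹ * ((α - 1) * ε) := mul_le_mul_of_nonneg_left hle (by positivity)
      _ = ε := by field_simp
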